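/- arXiv:2008.11590 — 3 statements merged into one kernel-verified Lean document; each statement's English description precedes it below -/
import Mathlib

section
/- The Peregrine breather B_P satisfies M[B_P] = ∫_ℝ (|B_P(t,x)|² - 1) dx = 0 for every t ∈ ℝ. -/
open Complex

/-- Partial derivative in the first (time) variable. -/
noncomputable def pdt (u : ℝ → ℝ → ℂ) (t x : ℝ) : ℂ := deriv (fun s => u s x) t

/-- Partial derivative in the second (space) variable. -/
noncomputable def pdx (u : ℝ → ℝ → ℂ) (t x : ℝ) : ℂ := deriv (fun y => u t y) x

/-- `u` solves the cubic focusing NLS `i u_t + u_xx + |u|² u = 0`. -/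
def IsNLSSolution (u : ℝ → ℝ → ℂ) : Prop :=
  ∀ t x : ℝ, Complex.I * pdt u t x + pdx (pdx u) t x
    + ((‖u t x‖ : ℂ))^2 * u t x = 0

/-- The Peregrine breather. -/
noncomputable def BP (t x : ℝ) : ℂ :=
  Complex.exp (Complex.I * t) *
    (1 - 4 * (1 + 2 * Complex.I * t) / (1 + 4 * (t:ℂ)^2 + 2 * (x:ℂ)^2))

section aux

variable {c : ℝ}

lemma hasDerivAt_aux (hc : 0 < c) (x : ℝ) :
    HasDerivAt (fun y : ℝ => 4 * y / (y ^ 2 + c)) (4 * (c - x ^ 2) / (x ^ 2 + c) ^ 2) x := by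
  have hden : x ^ 2 + c ≠ 0 := by positivity
  have h1 : HasDerivAt (fun y : ℝ => 4 * y) 4 x := by
    simpa using (hasDerivAt_id x).const_mul (4 : ℝ)
  have h2 : HasDerivAt (fun y : ℝ => y ^ 2 + c) (2 * x) x := by
    simpa using ((hasDerivAt_pow 2 x).add_const c)
  have := h1.div h2 hden
  simp only [Pi.div_def] at this
  refine this.congr_deriv ?_
  ring

lemma tendsto_aux_top (hc : 0 < c) :
    Filter.Tendsto (fun y : ℝ => 4 * y / (y ^ 2 + c)) Filter.atTop (nhds 0) := by
  have h1 : Filter.Tendsto (fun y : ℝ => (4 : ℝ) / y) Filter.atTop (nhds 0) :=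
    Filter.Tendsto.div_atTop tendsto_const_nhds Filter.tendsto_id
  have h2 : Filter.Tendsto (fun y : ℝ => 1 + c / y ^ 2) Filter.atTop (nhds 1) := by
    have : Filter.Tendsto (fun y : ℝ => c / y ^ 2) Filter.atTop (nhds 0) :=
      Filter.Tendsto.div_atTop tendsto_const_nhds (Filter.tendsto_pow_atTop two_ne_zero)
    simpa using (tendsto_const_nhds.add this)
  have h3 := h1.div h2 one_ne_zero
  rw [show (0 : ℝ) / 1 = 0 by norm_num] at h3
  refine h3.congr' ?_
  filter_upwards [Filter.eventually_gt_atTop (0 : ℝ)] with y hy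
  have hy' : y ≠ 0 := ne_of_gt hy
  simp only [Pi.div_apply]
  field_simp

lemma tendsto_aux_bot (hc : 0 < c) :
    Filter.Tendsto (fun y : ℝ => 4 * y / (y ^ 2 + c)) Filter.atBot (nhds 0) := by
  have h := ((tendsto_aux_top hc).comp Filter.tendsto_neg_atBot_atTop).neg
  rw [neg_zero] at h
  refine h.congr (fun y => ?_)
  simp [Function.comp]
  ring

lemma integrable_aux (hc : 0 < c) :
    MeasureTheory.Integrable (fun x : ℝ => 4 * (c - x ^ 2) / (x ^ 2 + c) ^ 2) := by
  have hcont : Continuous (fun x : ℝ => 4 * (c - x ^ 2) / (x ^ 2 + c) ^ 2) := by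
    apply Continuous.div (by continuity) (by continuity)
    intro x; positivity
  have hbound : MeasureTheory.Integrable
      (fun x : ℝ => (4 / min 1 c) * (1 / (1 + x ^ 2))) := by
    simpa using (integrable_inv_one_add_sq.const_mul (4 / min 1 c))
  refine hbound.mono' hcont.aestronglyMeasurable ?_
  refine Filter.Eventually.of_forall (fun x => ?_)
  have hm : 0 < min 1 c := lt_min one_pos hc
  have hm1 : min 1 c ≤ 1 := min_le_left _ _
  have hmc : min 1 c ≤ c := min_le_right _ _
  have hden : (0 : ℝ) < x ^ 2 + c := by positivity
  rw [Real.norm_eq_abs]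
  have habs : |4 * (c - x ^ 2) / (x ^ 2 + c) ^ 2| ≤ 4 / (x ^ 2 + c) := by
    rw [abs_div, _root_.abs_of_pos (by positivity : (0:ℝ) < (x ^ 2 + c) ^ 2),
      div_le_div_iff₀ (by positivity) hden]
    have h2 : |c - x ^ 2| ≤ x ^ 2 + c := by
      rw [abs_le]; constructor <;> nlinarith [sq_nonneg x]
    have h3 : |4 * (c - x ^ 2)| = 4 * |c - x ^ 2| := by
      rw [abs_mul, _root_.abs_of_pos (by norm_num : (0:ℝ) < 4)]
    rw [h3]
    nlinarith [h2, hden]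
  refine habs.trans ?_
  rw [div_mul_div_comm, mul_one, div_le_div_iff₀ hden (by positivity)]
  nlinarith [sq_nonneg x, mul_nonneg hm.le (sq_nonneg x)]

end aux

lemma BP_sq_abs (t x : ℝ) :
    (‖BP t x‖) ^ 2 - 1
      = 4 * ((1 + 4 * t ^ 2) / 2 - x ^ 2) / (x ^ 2 + (1 + 4 * t ^ 2) / 2) ^ 2 := by
  have hDr : (0 : ℝ) < 1 + 4 * t ^ 2 + 2 * x ^ 2 := by positivity
  have hDr' : ((1 + 4 * t ^ 2 + 2 * x ^ 2 : ℝ) : ℂ) ≠ 0 := by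
    exact_mod_cast Complex.ofReal_ne_zero.mpr hDr.ne'
  have hz : 1 - 4 * (1 + 2 * Complex.I * t) / (1 + 4 * (t:ℂ)^2 + 2 * (x:ℂ)^2)
      = ((1 - 4 / (1 + 4 * t ^ 2 + 2 * x ^ 2) : ℝ) : ℂ)
        + ((-8 * t / (1 + 4 * t ^ 2 + 2 * x ^ 2) : ℝ) : ℂ) * Complex.I := by
    have h : (1 + 4 * (t:ℂ)^2 + 2 * (x:ℂ)^2) = ((1 + 4 * t ^ 2 + 2 * x ^ 2 : ℝ) : ℂ) := by
      push_cast; ring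
    rw [h]
    push_cast
    field_simp
    ring
  have habs : (‖BP t x‖) ^ 2
      = (1 - 4 / (1 + 4 * t ^ 2 + 2 * x ^ 2)) ^ 2
        + (-8 * t / (1 + 4 * t ^ 2 + 2 * x ^ 2)) ^ 2 := by
    rw [BP, norm_mul, Complex.norm_exp]
    have hre : (Complex.I * (t : ℂ)).re = 0 := by simp
    rw [hre, Real.exp_zero, one_mul, hz, Complex.sq_norm, Complex.normSq_add_mul_I]
  rw [habs]
  have hden : (x ^ 2 + (1 + 4 * t ^ 2) / 2) ≠ 0 := by positivity
  field_simp
  ring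

theorem peregrine_zero_mass (t : ℝ) :
    ∫ x : ℝ, ((‖BP t x‖)^2 - 1) = 0 := by
  set c : ℝ := (1 + 4 * t ^ 2) / 2 with hcdef
  have hc : 0 < c := by positivity
  have hg0 : ∫ x : ℝ, 4 * (c - x ^ 2) / (x ^ 2 + c) ^ 2 = 0 := by
    have := MeasureTheory.integral_of_hasDerivAt_of_tendsto
      (f := fun y : ℝ => 4 * y / (y ^ 2 + c))
      (f' := fun x : ℝ => 4 * (c - x ^ 2) / (x ^ 2 + c) ^ 2)
      (fun x => hasDerivAt_aux hc x) (integrable_aux hc)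
      (tendsto_aux_bot hc) (tendsto_aux_top hc)
    simpa using this
  have hint : ∀ x : ℝ, ((‖BP t x‖ : ℂ)) ^ 2 - 1
      = ((4 * (c - x ^ 2) / (x ^ 2 + c) ^ 2 : ℝ) : ℂ) := by
    intro x
    rw [← BP_sq_abs t x]
    push_cast
    ring
  have heq : ∀ x : ℝ, ‖BP t x‖ ^ 2 - 1 = 4 * (c - x ^ 2) / (x ^ 2 + c) ^ 2 := by
    intro x
    rw [hcdef]
    exact BP_sq_abs t x
  simp_rw [heq]
  exact hg0
end

section
/- The Peregrine breather B_P satisfies E[B_P] = ∫_ℝ |∂_x B_P|² dx - (1/2)∫_ℝ (|B_P|² - 1)² dx = 0 for every t ∈ ℝ. -/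
open Complex

lemma den_eq (t x : ℝ) : (1 + 4 * (t:ℂ)^2 + 2 * (x:ℂ)^2) = ((1 + 4*t^2 + 2*x^2 : ℝ) : ℂ) := by
  push_cast; ring

lemma d_pos (t x : ℝ) : (0:ℝ) < 1 + 4*t^2 + 2*x^2 := by positivity

lemma den_ne (t x : ℝ) : (1 + 4 * (t:ℂ)^2 + 2 * (x:ℂ)^2) ≠ 0 := by
  rw [den_eq]
  exact_mod_cast (d_pos t x).ne'

lemma pdx_BP (t x : ℝ) :
    pdx BP t x = Complex.exp (Complex.I*t) * (16*(x:ℂ)*(1+2*Complex.I*(t:ℂ)))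
      / (1 + 4 * (t:ℂ)^2 + 2 * (x:ℂ)^2)^2 := by
  have hx : HasDerivAt (fun y : ℝ => ((y:ℂ))) 1 x := Complex.ofRealCLM.hasDerivAt
  have h2 : HasDerivAt (fun y : ℝ => ((y:ℂ))^2) (2*(x:ℂ)) x := by
    simpa using (hasDerivAt_pow 2 (x:ℂ)).comp_ofReal
  have hden : HasDerivAt (fun y : ℝ => 1 + 4 * (t:ℂ)^2 + 2 * ((y:ℂ))^2) (4*(x:ℂ)) x := by
    have h3 := HasDerivAt.const_add (1 + 4 * (t:ℂ)^2) (HasDerivAt.const_mul (2:ℂ) h2)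
    exact h3.congr_deriv (by ring)
  have hquot := (hasDerivAt_const x (4 * (1 + 2 * Complex.I * (t:ℂ)))).div hden (den_ne t x)
  have hfull := HasDerivAt.const_mul (Complex.exp (Complex.I*t))
      (HasDerivAt.const_sub 1 hquot)
  rw [pdx]
  simp only [BP]
  rw [show deriv (fun y : ℝ => Complex.exp (Complex.I*t) * (1 - 4 * (1 + 2 * Complex.I * t) / (1 + 4 * (t:ℂ)^2 + 2 * (y:ℂ)^2))) x = _ from hfull.deriv]
  rw [den_eq] at *
  field_simp
  ring

lemma ofReal_d_ne (t x : ℝ) : ((1 + 4*t^2 + 2*x^2 : ℝ) : ℂ) ≠ 0 := by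
  exact_mod_cast (d_pos t x).ne'

lemma norm_pdx (t x : ℝ) :
    ‖pdx BP t x‖^2 = 256*x^2*(1+4*t^2)/(1+4*t^2+2*x^2)^4 := by
  rw [pdx_BP, den_eq]
  have h2 : ‖(1+2*Complex.I*(t:ℂ))‖^2 = 1+4*t^2 := by
    rw [Complex.sq_norm, Complex.normSq_apply]
    simp
    ring
  have hc : ‖(((1+4*t^2+2*x^2:ℝ)):ℂ)‖ = 1+4*t^2+2*x^2 := by
    rw [Complex.norm_real, Real.norm_eq_abs]; exact abs_of_pos (d_pos t x)
  rw [norm_div, norm_mul, norm_mul, norm_mul, norm_pow, hc]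
  simp [Complex.norm_exp]
  rw [div_pow, mul_pow, mul_pow, h2, ← pow_mul, _root_.sq_abs]
  norm_num

lemma absBP_sq (t x : ℝ) :
    ‖BP t x‖^2 - 1 = 8*(1+4*t^2-2*x^2)/(1+4*t^2+2*x^2)^2 := by
  have key : BP t x = Complex.exp (Complex.I*t) *
      ((((1+4*t^2+2*x^2-4)/(1+4*t^2+2*x^2):ℝ):ℂ)
        + (((-8*t)/(1+4*t^2+2*x^2):ℝ):ℂ)*Complex.I) := by
    rw [BP]
    congr 1
    have h := den_ne t x
    push_cast
    field_simp
    ring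
  rw [key, Complex.sq_norm, map_mul, Complex.normSq_add_mul_I]
  have : Complex.normSq (Complex.exp (Complex.I*t)) = 1 := by
    have := Complex.sq_norm (Complex.exp (Complex.I*(t:ℂ)))
    simp [Complex.norm_exp] at this
    linarith [this]
  rw [this, one_mul]
  have hd := (d_pos t x).ne'
  field_simp
  ring

noncomputable def F (t x : ℝ) : ℝ := (64/3*x^3 - 32*(1+4*t^2)*x) / (1+4*t^2+2*x^2)^3

lemma hasDerivAt_F (t x : ℝ) : HasDerivAt (F t)
    (256*x^2*(1+4*t^2)/(1+4*t^2+2*x^2)^4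
      - 1/2*(8*(1+4*t^2-2*x^2)/(1+4*t^2+2*x^2)^2)^2) x := by
  have hnum : HasDerivAt (fun y : ℝ => 64/3*y^3 - 32*(1+4*t^2)*y)
      (64*x^2 - 32*(1+4*t^2)) x := by
    have h1 := HasDerivAt.const_mul (64/3 : ℝ) (hasDerivAt_pow 3 x)
    have h2 := HasDerivAt.const_mul (32*(1+4*t^2) : ℝ) (hasDerivAt_id x)
    refine (h1.sub h2).congr_deriv ?_
    push_cast
    ring
  have hb : HasDerivAt (fun y : ℝ => 1+4*t^2+2*y^2) (4*x) x := by
    have h1 := HasDerivAt.const_add (1+4*t^2 : ℝ)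
      (HasDerivAt.const_mul (2:ℝ) (hasDerivAt_pow 2 x))
    refine h1.congr_deriv ?_
    push_cast
    ring
  have hden : HasDerivAt (fun y : ℝ => (1+4*t^2+2*y^2)^3)
      (3*(1+4*t^2+2*x^2)^2*(4*x)) x := by
    have := hb.pow 3
    exact this.congr_deriv (by norm_num)
  have hd : (1+4*t^2+2*x^2 : ℝ) ≠ 0 := (d_pos t x).ne'
  have h := hnum.div hden (by positivity)
  refine h.congr_deriv ?_
  field_simp
  ring

lemma F_tendsto_top (t : ℝ) : Filter.Tendsto (F t) Filter.atTop (nhds 0) := by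
  have h := Polynomial.div_tendsto_zero_of_degree_lt
    (Polynomial.C (64/3 : ℝ) * Polynomial.X^3 - Polynomial.C (32*(1+4*t^2)) * Polynomial.X)
    ((Polynomial.C (1+4*t^2 : ℝ) + Polynomial.C 2 * Polynomial.X^2)^3)
    (by
      have h1 : (Polynomial.C (64/3 : ℝ) * Polynomial.X^3
          - Polynomial.C (32*(1+4*t^2)) * Polynomial.X).degree ≤ 3 := by
        compute_degree
      have h2 : ((Polynomial.C (1+4*t^2 : ℝ) + Polynomial.C 2 * Polynomial.X^2)^3).degree = 6 := by
        compute_degree!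
      rw [h2]
      exact lt_of_le_of_lt h1 (by norm_num))
  convert h using 2 with x
  simp [F]

lemma F_tendsto_bot (t : ℝ) : Filter.Tendsto (F t) Filter.atBot (nhds 0) := by
  have h := ((F_tendsto_top t).comp Filter.tendsto_neg_atBot_atTop).neg
  rw [neg_zero] at h
  convert h using 2 with x
  simp only [Function.comp_apply, F]
  rw [← neg_div]
  congr 1
  · ring
  · ring

lemma integrable_f (t : ℝ) :
    MeasureTheory.Integrable (fun x : ℝ => 256*x^2*(1+4*t^2)/(1+4*t^2+2*x^2)^4) := by
  have hcont : Continuous fun x:ℝ => 256*x^2*(1+4*t^2)/(1+4*t^2+2*x^2)^4 := by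
    apply Continuous.div (by continuity) (by continuity)
    intro x; positivity
  apply (integrable_inv_one_add_sq.const_mul 128).mono' hcont.aestronglyMeasurable
  filter_upwards with x
  rw [Real.norm_eq_abs, _root_.abs_of_nonneg (by positivity), ← div_eq_mul_inv]
  rw [div_le_div_iff₀ (by positivity) (by positivity)]
  calc 256*x^2*(1+4*t^2)*(1+x^2)
      = 128*((1+4*t^2)*(2*x^2)*(1+x^2)*1) := by ring
    _ ≤ 128*((1+4*t^2+2*x^2)*(1+4*t^2+2*x^2)*(1+4*t^2+2*x^2)*(1+4*t^2+2*x^2)) := by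
        gcongr 128 * (?_ * ?_ * ?_ * ?_) <;> nlinarith [sq_nonneg t, sq_nonneg x]
    _ = 128 * (1+4*t^2+2*x^2)^4 := by ring

lemma integrable_g (t : ℝ) :
    MeasureTheory.Integrable (fun x : ℝ => (8*(1+4*t^2-2*x^2)/(1+4*t^2+2*x^2)^2)^2) := by
  have hcont : Continuous fun x:ℝ => (8*(1+4*t^2-2*x^2)/(1+4*t^2+2*x^2)^2)^2 := by
    apply Continuous.pow
    apply Continuous.div (by continuity) (by continuity)
    intro x; positivity
  apply (integrable_inv_one_add_sq.const_mul 64).mono' hcont.aestronglyMeasurable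
  filter_upwards with x
  rw [Real.norm_eq_abs, _root_.abs_of_nonneg (by positivity), ← div_eq_mul_inv, div_pow,
    div_le_div_iff₀ (by positivity) (by positivity)]
  calc (8*(1+4*t^2-2*x^2))^2*(1+x^2)
      = 64*((1+4*t^2-2*x^2)^2*(1+x^2)*1) := by ring
    _ ≤ 64*((1+4*t^2+2*x^2)^2*(1+4*t^2+2*x^2)*(1+4*t^2+2*x^2)) := by
        gcongr 64 * (?_ * ?_ * ?_) <;>
          nlinarith [sq_nonneg t, sq_nonneg x, mul_nonneg (sq_nonneg x) (sq_nonneg t)]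
    _ = 64 * ((1+4*t^2+2*x^2)^2)^2 := by ring

theorem peregrine_zero_energy (t : ℝ) :
    (∫ x : ℝ, ‖pdx BP t x‖^2) - (1/2) * ∫ x : ℝ, ((‖BP t x‖)^2 - 1)^2 = 0 := by
  have e1 : ∀ x : ℝ, ‖pdx BP t x‖^2 = 256*x^2*(1+4*t^2)/(1+4*t^2+2*x^2)^4 := norm_pdx t
  have e2 : ∀ x : ℝ, ((‖BP t x‖)^2 - 1)^2
      = (8*(1+4*t^2-2*x^2)/(1+4*t^2+2*x^2)^2)^2 := fun x => by rw [absBP_sq]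
  simp only [e1, e2]
  rw [← MeasureTheory.integral_const_mul,
    ← MeasureTheory.integral_sub (integrable_f t) ((integrable_g t).const_mul (1/2))]
  have key := MeasureTheory.integral_of_hasDerivAt_of_tendsto (hasDerivAt_F t)
    ((integrable_f t).sub ((integrable_g t).const_mul (1/2)))
    (F_tendsto_bot t) (F_tendsto_top t)
  simpa using key
end

section
/- The Peregrine breather B = B_P satisfies, for every (t,x) ∈ ℝ², the fourth-order nonlinear ODE in x: B_{xxxx} + 3 B_x² B̄ + (4|B|² - 3) B_{xx} + B² B̄_{xx} + 2|B_x|² B + (3/2)(|B|² - 1)² B = 0, where B̄ denotes complex conjugation. -/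
open Complex

noncomputable def Dc (t x : ℝ) : ℂ := 1 + 4 * (t:ℂ)^2 + 2 * (x:ℂ)^2

lemma Dc_ne (t x : ℝ) : Dc t x ≠ 0 := by
  have h : Dc t x = ((1 + 4*t^2 + 2*x^2 : ℝ) : ℂ) := by unfold Dc; push_cast; ring
  rw [h, Ne, Complex.ofReal_eq_zero]
  nlinarith [sq_nonneg t, sq_nonneg x]

lemma hasDeriv_poly (a0 a1 a2 a3 : ℂ) (w : ℂ) :
    HasDerivAt (fun z : ℂ => a0 + a1*z + a2*z^2 + a3*z^3)
      (a1 + 2*a2*w + 3*a3*w^2) w := by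
  have h := (((hasDerivAt_const w a0).fun_add ((hasDerivAt_id w).const_mul a1)).fun_add
      (((hasDerivAt_id w).fun_pow 2).const_mul a2)).fun_add
      (((hasDerivAt_id w).fun_pow 3).const_mul a3)
  simp only [id_eq] at h
  refine h.congr_deriv ?_
  push_cast; ring

/-- Generic derivative of `y ↦ N(y) / D(y)^(n+1)` restricted to the reals. -/
lemma hasDeriv_frac (t x : ℝ) (n : ℕ) (a0 a1 a2 a3 : ℂ) :
    HasDerivAt (fun y : ℝ => (a0 + a1*(y:ℂ) + a2*(y:ℂ)^2 + a3*(y:ℂ)^3) / (Dc t y)^(n+1))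
      (((a1 + 2*a2*(x:ℂ) + 3*a3*(x:ℂ)^2) * (Dc t x)^(n+1)
        - (a0 + a1*(x:ℂ) + a2*(x:ℂ)^2 + a3*(x:ℂ)^3)
            * (((n:ℂ)+1) * (Dc t x)^n * (4*(x:ℂ)))) / ((Dc t x)^(n+1))^2) x := by
  have hDz : HasDerivAt (fun z : ℂ => 1 + 4*(t:ℂ)^2 + 2*z^2) (4*(x:ℂ)) (x:ℂ) := by
    have h := hasDeriv_poly (1 + 4*(t:ℂ)^2) 0 2 0 (x:ℂ)
    convert h using 1
    · funext z; ring
    · ring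
  have hpow : HasDerivAt (fun z : ℂ => (1 + 4*(t:ℂ)^2 + 2*z^2)^(n+1))
      (((n:ℂ)+1) * (Dc t x)^n * (4*(x:ℂ))) (x:ℂ) := by
    have h := hDz.fun_pow (n+1)
    have e : (1 + 4*(t:ℂ)^2 + 2*((x:ℂ))^2) = Dc t x := by unfold Dc; ring
    simpa [e, Nat.add_sub_cancel] using h
  have hN := hasDeriv_poly a0 a1 a2 a3 (x:ℂ)
  have hne : (1 + 4*(t:ℂ)^2 + 2*((x:ℂ))^2)^(n+1) ≠ 0 := by
    have e : (1 + 4*(t:ℂ)^2 + 2*((x:ℂ))^2) = Dc t x := by unfold Dc; ring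
    rw [e]; exact pow_ne_zero _ (Dc_ne t x)
  have h := (hN.fun_div hpow hne).comp_ofReal
  have e : (1 + 4*(t:ℂ)^2 + 2*((x:ℂ))^2) = Dc t x := by unfold Dc; ring
  rw [e] at h
  convert h using 2
  rfl

lemma Dc_def (t x : ℝ) : Dc t x = 1 + 4*(t:ℂ)^2 + 2*(x:ℂ)^2 := rfl

lemma pdx1 (t x : ℝ) : pdx BP t x =
    Complex.exp (Complex.I*t) * (16*(1+2*Complex.I*t)*(x:ℂ) / (Dc t x)^2) := by
  have hne := Dc_ne t x
  have hne' : (1 + 4*(t:ℂ)^2 + 2*(x:ℂ)^2) ≠ 0 := Dc_def t x ▸ hne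
  have hfun : (fun y : ℝ => BP t y) = fun y : ℝ => Complex.exp (Complex.I*t) *
      (((1 + 4*(t:ℂ)^2 - 4*(1+2*Complex.I*t)) + 0*(y:ℂ) + 2*(y:ℂ)^2 + 0*(y:ℂ)^3)
        / (Dc t y)^(0+1)) := by
    funext y
    have hy : (1 + 4*(t:ℂ)^2 + 2*(y:ℂ)^2) ≠ 0 := Dc_def t y ▸ Dc_ne t y
    unfold BP
    rw [Dc_def]
    field_simp at hy ⊢
    ring
  have h := ((hasDeriv_frac t x 0 (1 + 4*(t:ℂ)^2 - 4*(1+2*Complex.I*t)) 0 2 0).const_mul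
      (Complex.exp (Complex.I*t)))
  rw [pdx, hfun, h.deriv]
  rw [Dc_def]
  field_simp
  ring

lemma pdx2 (t x : ℝ) : pdx (pdx BP) t x =
    Complex.exp (Complex.I*t) *
      ((16*(1+2*Complex.I*t)*(1+4*(t:ℂ)^2) - 96*(1+2*Complex.I*t)*(x:ℂ)^2) / (Dc t x)^3) := by
  have hne := Dc_ne t x
  have hfun : (fun y : ℝ => pdx BP t y) = fun y : ℝ => Complex.exp (Complex.I*t) *
      ((0 + (16*(1+2*Complex.I*t))*(y:ℂ) + 0*(y:ℂ)^2 + 0*(y:ℂ)^3) / (Dc t y)^(1+1)) := by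
    funext y; rw [pdx1 t y]; ring
  have h := ((hasDeriv_frac t x 1 0 (16*(1+2*Complex.I*t)) 0 0).const_mul
      (Complex.exp (Complex.I*t)))
  rw [pdx, hfun, h.deriv]
  rw [Dc_def]
  have hne' : (1 + 4*(t:ℂ)^2 + 2*(x:ℂ)^2) ≠ 0 := Dc_def t x ▸ hne
  field_simp at hne' ⊢
  ring

lemma pdx3 (t x : ℝ) : pdx (pdx (pdx BP)) t x =
    Complex.exp (Complex.I*t) *
      ((-384*(1+2*Complex.I*t)*(1+4*(t:ℂ)^2)*(x:ℂ) + 768*(1+2*Complex.I*t)*(x:ℂ)^3)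
        / (Dc t x)^4) := by
  have hne := Dc_ne t x
  have hfun : (fun y : ℝ => pdx (pdx BP) t y) = fun y : ℝ => Complex.exp (Complex.I*t) *
      (((16*(1+2*Complex.I*t)*(1+4*(t:ℂ)^2)) + 0*(y:ℂ) + (-96*(1+2*Complex.I*t))*(y:ℂ)^2
        + 0*(y:ℂ)^3) / (Dc t y)^(2+1)) := by
    funext y; rw [pdx2 t y]; ring
  have h := ((hasDeriv_frac t x 2 (16*(1+2*Complex.I*t)*(1+4*(t:ℂ)^2)) 0
      (-96*(1+2*Complex.I*t)) 0).const_mul (Complex.exp (Complex.I*t)))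
  rw [pdx, hfun, h.deriv]
  rw [Dc_def]
  have hne' : (1 + 4*(t:ℂ)^2 + 2*(x:ℂ)^2) ≠ 0 := Dc_def t x ▸ hne
  field_simp at hne' ⊢
  ring

lemma pdx4 (t x : ℝ) : pdx (pdx (pdx (pdx BP))) t x =
    Complex.exp (Complex.I*t) *
      ((-384*(1+2*Complex.I*t)*(1+4*(t:ℂ)^2)^2 + 7680*(1+2*Complex.I*t)*(1+4*(t:ℂ)^2)*(x:ℂ)^2
        - 7680*(1+2*Complex.I*t)*(x:ℂ)^4) / (Dc t x)^5) := by
  have hne := Dc_ne t x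
  have hfun : (fun y : ℝ => pdx (pdx (pdx BP)) t y) = fun y : ℝ => Complex.exp (Complex.I*t) *
      ((0 + (-384*(1+2*Complex.I*t)*(1+4*(t:ℂ)^2))*(y:ℂ) + 0*(y:ℂ)^2
        + (768*(1+2*Complex.I*t))*(y:ℂ)^3) / (Dc t y)^(3+1)) := by
    funext y; rw [pdx3 t y]; ring
  have h := ((hasDeriv_frac t x 3 0 (-384*(1+2*Complex.I*t)*(1+4*(t:ℂ)^2)) 0
      (768*(1+2*Complex.I*t))).const_mul (Complex.exp (Complex.I*t)))
  rw [pdx, hfun, h.deriv]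
  rw [Dc_def]
  have hne' : (1 + 4*(t:ℂ)^2 + 2*(x:ℂ)^2) ≠ 0 := Dc_def t x ▸ hne
  field_simp at hne' ⊢
  ring

set_option maxHeartbeats 1000000 in
lemma alg_identity (E F i T X D : ℂ) (hEF : E*F = 1) (hi : i^2 = -1)
    (hD : D = 1 + 4*T^2 + 2*X^2) :
    2*(E*(1+2*i*T)*(-384*(1+4*T^2)^2 + 7680*(1+4*T^2)*X^2 - 7680*X^4))
      + 1536*E^2*F*(1+2*i*T)^2*X^2*(D-4*(1-2*i*T))
      + 2*(4*(E*F)*(D-4*(1+2*i*T))*(D-4*(1-2*i*T)) - 3*D^2)*(E*(1+2*i*T)*(16*(1+4*T^2)-96*X^2))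
      + 2*E^2*F*(D-4*(1+2*i*T))^2*((1-2*i*T)*(16*(1+4*T^2)-96*X^2))
      + 1024*E^2*F*(1+2*i*T)*(1-2*i*T)*X^2*(D-4*(1+2*i*T))
      + 3*E*(D-4*(1+2*i*T))*(E*F*(D-4*(1+2*i*T))*(D-4*(1-2*i*T)) - D^2)^2 = 0 := by
  linear_combination ((-105:ℂ)*E + (-105:ℂ)*E*D + (-9:ℂ)*E*D^2 + (-9:ℂ)*E*D^3 + (3:ℂ)*E*D^4 + (336:ℂ)*E*X^2 + (546:ℂ)*E*X^2*D + (-12:ℂ)*E*X^2*D^2 + (6:ℂ)*E*X^2*D^3 + (1080:ℂ)*E*X^4 + (-12:ℂ)*E*X^4*D + (12:ℂ)*E*X^4*D^2 + (24:ℂ)*E*X^6*D + (48:ℂ)*E*X^8 + (-864:ℂ)*E*T^2 + (-444:ℂ)*E*T^2*D + (-24:ℂ)*E*T^2*D^2 + (12:ℂ)*E*T^2*D^3 + (1248:ℂ)*E*T^2*X^2 + (-48:ℂ)*E*T^2*X^2*D + (48:ℂ)*E*T^2*X^2*D^2 + (144:ℂ)*E*T^2*X^4*D + (384:ℂ)*E*T^2*X^6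 + (-1824:ℂ)*E*T^4 + (-48:ℂ)*E*T^4*D + (48:ℂ)*E*T^4*D^2 + (288:ℂ)*E*T^4*X^2*D + (1152:ℂ)*E*T^4*X^4 + (192:ℂ)*E*T^6*D + (1536:ℂ)*E*T^6*X^2 + (768:ℂ)*E*T^8 + (-216:ℂ)*E*i*T + (-216:ℂ)*E*i*T*D + (-24:ℂ)*E*i*T*D^2 + (-24:ℂ)*E*i*T*D^3 + (624:ℂ)*E*i*T*X^2 + (1056:ℂ)*E*i*T*X^2*D + (-48:ℂ)*E*i*T*X^2*D^2 + (2016:ℂ)*E*i*T*X^4 + (-96:ℂ)*E*i*T*X^4*D + (-192:ℂ)*E*i*T*X^6 + (-1824:ℂ)*E*i*T^3 + (-960:ℂ)*E*i*T^3*D + (-96:ℂ)*E*i*T^3*D^2 + (1920:ℂ)*E*i*T^3*X^2 + (-384:ℂ)*E*i*T^3*X^2*D + (-1152:ℂ)*E*i*T^3*X^4 + (-4224:ℂ)*E*i*T^5 + (-384:ℂ)*E*i*T^5*D + (-2304:ℂ)*E*i*T^5*X^2 + (-1536:ℂ)*E*i*T^7 + (-958:ℂ)*E^2*F + (322:ℂ)*E^2*F*D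 + (-222:ℂ)*E^2*F*D^2 + (66:ℂ)*E^2*F*D^3 + (-6:ℂ)*E^2*F*D^4 + (9600:ℂ)*E^2*F*X^2 + (-1284:ℂ)*E^2*F*X^2*D + (120:ℂ)*E^2*F*X^2*D^2 + (-12:ℂ)*E^2*F*X^2*D^3 + (-2352:ℂ)*E^2*F*X^4 + (216:ℂ)*E^2*F*X^4*D + (-24:ℂ)*E^2*F*X^4*D^2 + (384:ℂ)*E^2*F*X^6 + (-48:ℂ)*E^2*F*X^6*D + (-96:ℂ)*E^2*F*X^8 + (-3840:ℂ)*E^2*F*T^2 + (-8:ℂ)*E^2*F*T^2*D + (240:ℂ)*E^2*F*T^2*D^2 + (-24:ℂ)*E^2*F*T^2*D^3 + (-4288:ℂ)*E^2*F*T^2*X^2 + (864:ℂ)*E^2*F*T^2*X^2*D + (-96:ℂ)*E^2*F*T^2*X^2*D^2 + (2304:ℂ)*E^2*F*T^2*X^4 + (-288:ℂ)*E^2*F*T^2*X^4*D + (-768:ℂ)*E^2*F*T^2*X^6 + (832:ℂ)*E^2*F*T^4 + (864:ℂ)*E^2*F*T^4*D + (-96:ℂ)*E^2*F*T^4*D^2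 + (4608:ℂ)*E^2*F*T^4*X^2 + (-576:ℂ)*E^2*F*T^4*X^2*D + (-2304:ℂ)*E^2*F*T^4*X^4 + (3072:ℂ)*E^2*F*T^6 + (-384:ℂ)*E^2*F*T^6*D + (-3072:ℂ)*E^2*F*T^6*X^2 + (-1536:ℂ)*E^2*F*T^8 + (-1424:ℂ)*E^2*F*i*T + (624:ℂ)*E^2*F*i*T*D + (-336:ℂ)*E^2*F*i*T*D^2 + (48:ℂ)*E^2*F*i*T*D^3 + (17952:ℂ)*E^2*F*i*T*X^2 + (-1728:ℂ)*E^2*F*i*T*X^2*D + (96:ℂ)*E^2*F*i*T*X^2*D^2 + (-3264:ℂ)*E^2*F*i*T*X^4 + (192:ℂ)*E^2*F*i*T*X^4*D + (384:ℂ)*E^2*F*i*T*X^6 + (-6080:ℂ)*E^2*F*i*T^3 + (-384:ℂ)*E^2*F*i*T^3*D + (192:ℂ)*E^2*F*i*T^3*D^2 + (-6912:ℂ)*E^2*F*i*T^3*X^2 + (768:ℂ)*E^2*F*i*T^3*X^2*D + (2304:ℂ)*E^2*F*i*T^3*X^4 + (-768:ℂ)*E^2*F*i*T^5 + (768:ℂ)*E^2*F*i*T^5*D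 + (4608:ℂ)*E^2*F*i*T^5*X^2 + (3072:ℂ)*E^2*F*i*T^7 + (-128:ℂ)*E^2*F*i^2*T^2 + (-1152:ℂ)*E^2*F*i^2*T^2*D + (384:ℂ)*E^2*F*i^2*T^2*D^2 + (-5632:ℂ)*E^2*F*i^2*T^2*X^2 + (768:ℂ)*E^2*F*i^2*T^2*X^2*D + (1536:ℂ)*E^2*F*i^2*T^2*X^4 + (1024:ℂ)*E^2*F*i^2*T^4 + (1536:ℂ)*E^2*F*i^2*T^4*D + (6144:ℂ)*E^2*F*i^2*T^4*X^2 + (6144:ℂ)*E^2*F*i^2*T^6 + (-3072:ℂ)*E^2*F*i^3*T^3 + (-3072:ℂ)*E^2*F*i^3*T^3*D + (-6144:ℂ)*E^2*F*i^3*T^3*X^2 + (-12288:ℂ)*E^2*F*i^3*T^5 + (2343:ℂ)*E^3*F^2 + (-1497:ℂ)*E^3*F^2*D + (423:ℂ)*E^3*F^2*D^2 + (-57:ℂ)*E^3*F^2*D^3 + (3:ℂ)*E^3*F^2*D^4 + (-2256:ℂ)*E^3*F^2*X^2 + (738:ℂ)*E^3*F^2*X^2*D + (-108:ℂ)*E^3*F^2*X^2*D^2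 + (6:ℂ)*E^3*F^2*X^2*D^3 + (1272:ℂ)*E^3*F^2*X^4 + (-204:ℂ)*E^3*F^2*X^4*D + (12:ℂ)*E^3*F^2*X^4*D^2 + (-384:ℂ)*E^3*F^2*X^6 + (24:ℂ)*E^3*F^2*X^6*D + (48:ℂ)*E^3*F^2*X^8 + (-4512:ℂ)*E^3*F^2*T^2 + (1476:ℂ)*E^3*F^2*T^2*D + (-216:ℂ)*E^3*F^2*T^2*D^2 + (12:ℂ)*E^3*F^2*T^2*D^3 + (5088:ℂ)*E^3*F^2*T^2*X^2 + (-816:ℂ)*E^3*F^2*T^2*X^2*D + (48:ℂ)*E^3*F^2*T^2*X^2*D^2 + (-2304:ℂ)*E^3*F^2*T^2*X^4 + (144:ℂ)*E^3*F^2*T^2*X^4*D + (384:ℂ)*E^3*F^2*T^2*X^6 + (5088:ℂ)*E^3*F^2*T^4 + (-816:ℂ)*E^3*F^2*T^4*D + (48:ℂ)*E^3*F^2*T^4*D^2 + (-4608:ℂ)*E^3*F^2*T^4*X^2 + (288:ℂ)*E^3*F^2*T^4*X^2*D + (1152:ℂ)*E^3*F^2*T^4*X^4 + (-3072:ℂ)*E^3*F^2*T^6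 + (192:ℂ)*E^3*F^2*T^6*D + (1536:ℂ)*E^3*F^2*T^6*X^2 + (768:ℂ)*E^3*F^2*T^8 + (4200:ℂ)*E^3*F^2*i*T + (-1944:ℂ)*E^3*F^2*i*T*D + (360:ℂ)*E^3*F^2*i*T*D^2 + (-24:ℂ)*E^3*F^2*i*T*D^3 + (-3216:ℂ)*E^3*F^2*i*T*X^2 + (672:ℂ)*E^3*F^2*i*T*X^2*D + (-48:ℂ)*E^3*F^2*i*T*X^2*D^2 + (1248:ℂ)*E^3*F^2*i*T*X^4 + (-96:ℂ)*E^3*F^2*i*T*X^4*D + (-192:ℂ)*E^3*F^2*i*T*X^6 + (-6432:ℂ)*E^3*F^2*i*T^3 + (1344:ℂ)*E^3*F^2*i*T^3*D + (-96:ℂ)*E^3*F^2*i*T^3*D^2 + (4992:ℂ)*E^3*F^2*i*T^3*X^2 + (-384:ℂ)*E^3*F^2*i*T^3*X^2*D + (-1152:ℂ)*E^3*F^2*i*T^3*X^4 + (4992:ℂ)*E^3*F^2*i*T^5 + (-384:ℂ)*E^3*F^2*i*T^5*D + (-2304:ℂ)*E^3*F^2*i*T^5*X^2 + (-1536:ℂ)*E^3*F^2*i*T^7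 + (-14208:ℂ)*E^3*F^2*i^2*T^2 + (4224:ℂ)*E^3*F^2*i^2*T^2*D + (-384:ℂ)*E^3*F^2*i^2*T^2*D^2 + (7680:ℂ)*E^3*F^2*i^2*T^2*X^2 + (-768:ℂ)*E^3*F^2*i^2*T^2*X^2*D + (-1536:ℂ)*E^3*F^2*i^2*T^2*X^4 + (15360:ℂ)*E^3*F^2*i^2*T^4 + (-1536:ℂ)*E^3*F^2*i^2*T^4*D + (-6144:ℂ)*E^3*F^2*i^2*T^4*X^2 + (-6144:ℂ)*E^3*F^2*i^2*T^6 + (-21504:ℂ)*E^3*F^2*i^3*T^3 + (3072:ℂ)*E^3*F^2*i^3*T^3*D + (6144:ℂ)*E^3*F^2*i^3*T^3*X^2 + (12288:ℂ)*E^3*F^2*i^3*T^5 + (12288:ℂ)*E^3*F^2*i^4*T^4) * hD + ((873:ℂ)*E + (-15486:ℂ)*E*X^2 + (13608:ℂ)*E*X^4 + (-2160:ℂ)*E*X^6 + (-48:ℂ)*E*X^8 + (-96:ℂ)*E*X^10 + (7428:ℂ)*E*T^2 + (13472:ℂ)*E*T^2*X^2 + (-2720:ℂ)*E*T^2*X^4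 + (-384:ℂ)*E*T^2*X^6 + (-960:ℂ)*E*T^2*X^8 + (-27488:ℂ)*E*T^4 + (15040:ℂ)*E*T^4*X^2 + (-1152:ℂ)*E*T^4*X^4 + (-3840:ℂ)*E*T^4*X^6 + (23680:ℂ)*E*T^6 + (-1536:ℂ)*E*T^6*X^2 + (-7680:ℂ)*E*T^6*X^4 + (-768:ℂ)*E*T^8 + (-7680:ℂ)*E*T^8*X^2 + (-3072:ℂ)*E*T^10 + (1752:ℂ)*E*i*T + (-30912:ℂ)*E*i*T*X^2 + (27456:ℂ)*E*i*T*X^4 + (-3840:ℂ)*E*i*T*X^6 + (384:ℂ)*E*i*T*X^8 + (19072:ℂ)*E*i*T^3 + (32000:ℂ)*E*i*T^3*X^2 + (-10752:ℂ)*E*i*T^3*X^4 + (3072:ℂ)*E*i*T^3*X^6 + (-45824:ℂ)*E*i*T^5 + (3072:ℂ)*E*i*T^5*X^2 + (9216:ℂ)*E*i*T^5*X^4 + (18432:ℂ)*E*i*T^7 + (12288:ℂ)*E*i*T^7*X^2 + (6144:ℂ)*E*i*T^9 + (75776:ℂ)*E*i^2*T^2*X^2 + (4096:ℂ)*E*i^2*T^2*X^4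 + (-81920:ℂ)*E*i^2*T^4 + (40960:ℂ)*E*i^2*T^4*X^2 + (65536:ℂ)*E*i^2*T^6 + (4096:ℂ)*E*i^3*T^3 + (155648:ℂ)*E*i^3*T^3*X^2 + (-180224:ℂ)*E*i^3*T^5 + (-36864:ℂ)*E*i^4*T^4 + (24576:ℂ)*E*i^4*T^4*X^2 + (49152:ℂ)*E*i^4*T^6 + (-98304:ℂ)*E*i^5*T^5 + (-729:ℂ)*E^2*F + (2430:ℂ)*E^2*F*X^2 + (-3240:ℂ)*E^2*F*X^4 + (2160:ℂ)*E^2*F*X^6 + (-720:ℂ)*E^2*F*X^8 + (96:ℂ)*E^2*F*X^10 + (4860:ℂ)*E^2*F*T^2 + (-12960:ℂ)*E^2*F*T^2*X^2 + (12960:ℂ)*E^2*F*T^2*X^4 + (-5760:ℂ)*E^2*F*T^2*X^6 + (960:ℂ)*E^2*F*T^2*X^8 + (-12960:ℂ)*E^2*F*T^4 + (25920:ℂ)*E^2*F*T^4*X^2 + (-17280:ℂ)*E^2*F*T^4*X^4 + (3840:ℂ)*E^2*F*T^4*X^6 + (17280:ℂ)*E^2*F*T^6 + (-23040:ℂ)*E^2*F*T^6*X^2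 + (7680:ℂ)*E^2*F*T^6*X^4 + (-11520:ℂ)*E^2*F*T^8 + (7680:ℂ)*E^2*F*T^8*X^2 + (3072:ℂ)*E^2*F*T^10 + (-1944:ℂ)*E^2*F*i*T + (5184:ℂ)*E^2*F*i*T*X^2 + (-5184:ℂ)*E^2*F*i*T*X^4 + (2304:ℂ)*E^2*F*i*T*X^6 + (-384:ℂ)*E^2*F*i*T*X^8 + (10368:ℂ)*E^2*F*i*T^3 + (-20736:ℂ)*E^2*F*i*T^3*X^2 + (13824:ℂ)*E^2*F*i*T^3*X^4 + (-3072:ℂ)*E^2*F*i*T^3*X^6 + (-20736:ℂ)*E^2*F*i*T^5 + (27648:ℂ)*E^2*F*i*T^5*X^2 + (-9216:ℂ)*E^2*F*i*T^5*X^4 + (18432:ℂ)*E^2*F*i*T^7 + (-12288:ℂ)*E^2*F*i*T^7*X^2 + (-6144:ℂ)*E^2*F*i*T^9 + (10368:ℂ)*E^2*F*i^2*T^2 + (-20736:ℂ)*E^2*F*i^2*T^2*X^2 + (13824:ℂ)*E^2*F*i^2*T^2*X^4 + (-3072:ℂ)*E^2*F*i^2*T^2*X^6 + (-41472:ℂ)*E^2*F*i^2*T^4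 + (55296:ℂ)*E^2*F*i^2*T^4*X^2 + (-18432:ℂ)*E^2*F*i^2*T^4*X^4 + (55296:ℂ)*E^2*F*i^2*T^6 + (-36864:ℂ)*E^2*F*i^2*T^6*X^2 + (-24576:ℂ)*E^2*F*i^2*T^8 + (27648:ℂ)*E^2*F*i^3*T^3 + (-36864:ℂ)*E^2*F*i^3*T^3*X^2 + (12288:ℂ)*E^2*F*i^3*T^3*X^4 + (-73728:ℂ)*E^2*F*i^3*T^5 + (49152:ℂ)*E^2*F*i^3*T^5*X^2 + (49152:ℂ)*E^2*F*i^3*T^7 + (-36864:ℂ)*E^2*F*i^4*T^4 + (24576:ℂ)*E^2*F*i^4*T^4*X^2 + (49152:ℂ)*E^2*F*i^4*T^6 + (-98304:ℂ)*E^2*F*i^5*T^5) * hEF + ((75776:ℂ)*E*T^2*X^2 + (4096:ℂ)*E*T^2*X^4 + (-45056:ℂ)*E*T^4 + (16384:ℂ)*E*T^4*X^2 + (16384:ℂ)*E*T^6 + (4096:ℂ)*E*i*T^3 + (155648:ℂ)*E*i*T^3*X^2 + (-81920:ℂ)*E*i*T^5 + (-36864:ℂ)*E*i^2*T^4 + (24576:ℂ)*E*i^2*T^4*X^2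 + (49152:ℂ)*E*i^2*T^6 + (-98304:ℂ)*E*i^3*T^5) * hi

set_option maxHeartbeats 1000000 in
theorem peregrine_elliptic_equation (t x : ℝ) :
    pdx (pdx (pdx (pdx BP))) t x
      + 3 * (pdx BP t x)^2 * (starRingEnd ℂ) (BP t x)
      + (4 * ((‖BP t x‖ : ℂ))^2 - 3) * pdx (pdx BP) t x
      + (BP t x)^2 * (starRingEnd ℂ) (pdx (pdx BP) t x)
      + 2 * ((‖pdx BP t x‖ : ℂ))^2 * BP t x
      + (3/2) * (((‖BP t x‖ : ℂ))^2 - 1)^2 * BP t x = 0 := by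
  have hne := Dc_ne t x
  have hne' : (1 + 4*(t:ℂ)^2 + 2*(x:ℂ)^2) ≠ 0 := Dc_def t x ▸ hne
  have habs : ∀ z : ℂ, ((‖z‖ : ℂ))^2 = z * (starRingEnd ℂ) z := by
    intro z
    have h2 : ((‖z‖ : ℂ))^2 = ((‖z‖ ^ 2 : ℝ) : ℂ) := by push_cast; ring
    rw [h2, Complex.sq_norm, ← Complex.mul_conj]
  have hconjD : (starRingEnd ℂ) (Dc t x) = Dc t x := by
    rw [Dc_def]; simp [map_add, map_mul, map_pow, Complex.conj_ofReal, map_ofNat]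
  have hBP : BP t x = cexp (Complex.I*(t:ℂ)) * (1 - 4*(1+2*Complex.I*(t:ℂ))/Dc t x) := rfl
  have hconjBP : (starRingEnd ℂ) (BP t x)
      = cexp (-(Complex.I*(t:ℂ))) * (1 - 4*(1-2*Complex.I*(t:ℂ))/Dc t x) := by
    rw [hBP]
    simp only [map_mul, map_sub, map_add, map_div₀, map_one, map_ofNat, Complex.conj_I,
      Complex.conj_ofReal, ← Complex.exp_conj, hconjD, neg_mul]
    ring_nf
  have hconjpdx1 : (starRingEnd ℂ) (pdx BP t x)
      = cexp (-(Complex.I*(t:ℂ))) * (16*(1-2*Complex.I*(t:ℂ))*(x:ℂ) / (Dc t x)^2) := by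
    rw [pdx1]
    simp only [map_mul, map_sub, map_add, map_div₀, map_one, map_ofNat, map_pow, Complex.conj_I,
      Complex.conj_ofReal, ← Complex.exp_conj, hconjD, neg_mul]
    ring_nf
  have hconjpdx2 : (starRingEnd ℂ) (pdx (pdx BP) t x)
      = cexp (-(Complex.I*(t:ℂ))) *
        ((16*(1-2*Complex.I*(t:ℂ))*(1+4*(t:ℂ)^2) - 96*(1-2*Complex.I*(t:ℂ))*(x:ℂ)^2)
          / (Dc t x)^3) := by
    rw [pdx2]
    simp only [map_mul, map_sub, map_add, map_div₀, map_one, map_ofNat, map_pow, Complex.conj_I,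
      Complex.conj_ofReal, ← Complex.exp_conj, hconjD, neg_mul]
    ring_nf
  have hEF : cexp (Complex.I*(t:ℂ)) * cexp (-(Complex.I*(t:ℂ))) = 1 := by
    rw [← Complex.exp_add]; simp
  have hI : Complex.I^2 = (-1 : ℂ) := Complex.I_sq
  have e1 : pdx (pdx (pdx (pdx BP))) t x = (2*((cexp (Complex.I*(t:ℂ)))*(1+2*Complex.I*((t:ℂ)))*(-384*(1+4*((t:ℂ))^2)^2 + 7680*(1+4*((t:ℂ))^2)*((x:ℂ))^2 - 7680*((x:ℂ))^4))) / (2 * (Dc t x)^5) := by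
    rw [pdx4]
    field_simp
  have e2 : 3 * (pdx BP t x)^2 * (starRingEnd ℂ) (BP t x) = (1536*(cexp (Complex.I*(t:ℂ)))^2*(cexp (-(Complex.I*(t:ℂ))))*(1+2*Complex.I*((t:ℂ)))^2*((x:ℂ))^2*((Dc t x)-4*(1-2*Complex.I*((t:ℂ))))) / (2 * (Dc t x)^5) := by
    rw [pdx1, hconjBP]
    field_simp
    ring
  have e3 : (4 * ((‖BP t x‖ : ℂ))^2 - 3) * pdx (pdx BP) t x = (2*(4*((cexp (Complex.I*(t:ℂ)))*(cexp (-(Complex.I*(t:ℂ)))))*((Dc t x)-4*(1+2*Complex.I*((t:ℂ))))*((Dc t x)-4*(1-2*Complex.I*((t:ℂ)))) - 3*(Dc t x)^2)*((cexp (Complex.I*(t:ℂ)))*(1+2*Complex.I*((t:ℂ)))*(16*(1+4*((t:ℂ))^2)-96*((x:ℂ))^2))) / (2 * (Dc t x)^5) := by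
    rw [habs, hconjBP, hBP, pdx2]
    field_simp
  have e4 : (BP t x)^2 * (starRingEnd ℂ) (pdx (pdx BP) t x) = (2*(cexp (Complex.I*(t:ℂ)))^2*(cexp (-(Complex.I*(t:ℂ))))*((Dc t x)-4*(1+2*Complex.I*((t:ℂ))))^2*((1-2*Complex.I*((t:ℂ)))*(16*(1+4*((t:ℂ))^2)-96*((x:ℂ))^2))) / (2 * (Dc t x)^5) := by
    rw [hBP, hconjpdx2]
    field_simp
  have e5 : 2 * ((‖pdx BP t x‖ : ℂ))^2 * BP t x = (1024*(cexp (Complex.I*(t:ℂ)))^2*(cexp (-(Complex.I*(t:ℂ))))*(1+2*Complex.I*((t:ℂ)))*(1-2*Complex.I*((t:ℂ)))*((x:ℂ))^2*((Dc t x)-4*(1+2*Complex.I*((t:ℂ))))) / (2 * (Dc t x)^5) := by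
    rw [habs, hconjpdx1, pdx1, hBP]
    field_simp
    ring
  have e6 : (3/2) * (((‖BP t x‖ : ℂ))^2 - 1)^2 * BP t x = (3*(cexp (Complex.I*(t:ℂ)))*((Dc t x)-4*(1+2*Complex.I*((t:ℂ))))*((cexp (Complex.I*(t:ℂ)))*(cexp (-(Complex.I*(t:ℂ))))*((Dc t x)-4*(1+2*Complex.I*((t:ℂ))))*((Dc t x)-4*(1-2*Complex.I*((t:ℂ)))) - (Dc t x)^2)^2) / (2 * (Dc t x)^5) := by
    rw [habs, hconjBP, hBP]
    field_simp
  rw [e1, e2, e3, e4, e5, e6, ← add_div, ← add_div, ← add_div,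
    ← add_div, ← add_div]
  exact div_eq_zero_iff.mpr (Or.inl
    (alg_identity (cexp (Complex.I*(t:ℂ))) (cexp (-(Complex.I*(t:ℂ)))) Complex.I
      ((t:ℂ)) ((x:ℂ)) (Dc t x) hEF hI (Dc_def t x)))
end
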